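/- Let a = 31207386885274502188173522132023665167365193670823768234185354856354918873864275 and M = 36812852443922071184402498913076070503146229820861211558347078871354783744850778, and for n ∈ ℕ set u_n = F_{3n}/2. Then for every integer x with x ≡ a (mod M) and all k, b ∈ ℕ, one has x² − u_{132+210k} ≠ 631^b and x² − u_{132+210k} ≠ −631^b. -/
import Mathlib


/-- `u n = F_{3n} / 2`, an integer since `F_{3n}` is always even. -/
def u (n : ℕ) : ℤ := (Nat.fib (3 * n) : ℤ) / 2

set_option maxRecDepth 40000 in
private lemma fib630 : Nat.fib 630 % 362 = 0 := by decide

set_option maxRecDepth 40000 in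
private lemma fib629 : Nat.fib 629 % 362 = 1 := by decide

set_option maxRecDepth 40000 in
private lemma fib396 : Nat.fib 396 % 362 = 24 := by decide

private lemma fib_period (k : ℕ) : Nat.fib (396 + 630 * k) % 362 = 24 := by
  induction k with
  | zero => simpa using fib396
  | succ k ih =>
    have h : 396 + 630 * (k + 1) = 629 + (396 + 630 * k) + 1 := by ring
    rw [h, Nat.fib_add, show (629 + 1) = 630 from rfl, Nat.add_mod,
      Nat.mul_mod (Nat.fib 629), Nat.mul_mod (Nat.fib 630), fib629, fib630, ih, Nat.zero_mul]

private lemma u_mod (k : ℕ) : (181 : ℤ) ∣ u (132 + 210 * k) - 12 := by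
  have h3 : 3 * (132 + 210 * k) = 396 + 630 * k := by ring
  have hf : Nat.fib (396 + 630 * k) % 362 = 24 := fib_period k
  have hdiv : Nat.fib (396 + 630 * k) / 2 % 181 = 12 := by omega
  obtain ⟨t, ht⟩ : 2 ∣ Nat.fib (396 + 630 * k) := by omega
  have ht181 : t % 181 = 12 := by omega
  rw [u, h3, ht]
  push_cast
  rw [Int.mul_ediv_cancel_left _ two_ne_zero]
  omega

private lemma pow88 (b : ℕ) :
    (88 : ZMod 181) ^ b ≠ 153 ∧ (88 : ZMod 181) ^ b ≠ 28 := by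
  have h36 : (88 : ZMod 181) ^ 36 = 1 := by decide
  have hb : (88 : ZMod 181) ^ b = (88 : ZMod 181) ^ (b % 36) := by
    conv_lhs => rw [← Nat.div_add_mod b 36, pow_add, pow_mul, h36, one_pow, one_mul]
  rw [hb]
  have hlt : b % 36 < 36 := Nat.mod_lt _ (by norm_num)
  revert hlt
  have : ∀ j < 36, (88 : ZMod 181) ^ j ≠ 153 ∧ (88 : ZMod 181) ^ j ≠ 28 := by decide
  exact this _

/-- Case 4.22 of the proof of Theorem 1.3: for every integer
`x ≡ a (mod M)` and all `k, b ∈ ℕ`, `x² - u_{132+210k}` is not `±631^b`. -/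
theorem sq_sub_u_ne_pm_pow_631
    (x : ℤ)
    (hx : x ≡ 31207386885274502188173522132023665167365193670823768234185354856354918873864275
      [ZMOD 36812852443922071184402498913076070503146229820861211558347078871354783744850778])
    (k b : ℕ) :
    x ^ 2 - u (132 + 210 * k) ≠ 631 ^ b ∧ x ^ 2 - u (132 + 210 * k) ≠ -(631 ^ b) := by
  have hx181 : x ≡ 76 [ZMOD 181] := by
    have h1 : x ≡ 31207386885274502188173522132023665167365193670823768234185354856354918873864275
        [ZMOD 181] := hx.of_dvd (by norm_num)
    refine h1.trans ?_
    decide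
  have hxz : (x : ZMod 181) = 76 := by
    have := (ZMod.intCast_eq_intCast_iff' x 76 181).mpr (by exact_mod_cast hx181)
    simpa using this
  have huz : ((u (132 + 210 * k) : ℤ) : ZMod 181) = 12 := by
    have h := u_mod k
    have : ((u (132 + 210 * k) - 12 : ℤ) : ZMod 181) = 0 := by
      exact_mod_cast (ZMod.intCast_zmod_eq_zero_iff_dvd _ _).mpr (by exact_mod_cast h)
    push_cast at this
    linear_combination this
  constructor
  · intro h
    have hc : ((x ^ 2 - u (132 + 210 * k) : ℤ) : ZMod 181) = ((631 : ℤ) ^ b : ℤ) := by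
      exact_mod_cast congrArg (Int.cast : ℤ → ZMod 181) h
    push_cast at hc
    rw [hxz, huz] at hc
    have : (88 : ZMod 181) ^ b = 153 := by
      have h631 : (631 : ZMod 181) = 88 := by decide
      have h5 : (76 : ZMod 181) ^ 2 - 12 = 153 := by decide
      rw [h631, h5] at hc
      exact hc.symm
    exact (pow88 b).1 this
  · intro h
    have hc : ((x ^ 2 - u (132 + 210 * k) : ℤ) : ZMod 181) = ((-(631 ^ b) : ℤ) : ZMod 181) := by
      exact_mod_cast congrArg (Int.cast : ℤ → ZMod 181) h
    push_cast at hc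
    rw [hxz, huz] at hc
    have : (88 : ZMod 181) ^ b = 28 := by
      have h631 : (631 : ZMod 181) = 88 := by decide
      have h28 : -((76 : ZMod 181) ^ 2 - 12) = 28 := by decide
      rw [h631] at hc
      rw [← h28, hc, neg_neg]
    exact (pow88 b).2 this
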